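/- Let m ≤ n be positive integers and let v_1, …, v_m be an orthogonal m-system in ℂ^n. Then C[v_1|v_m] P[v_1|v_m] = P[v_1|v_m] C[v_1|v_m] = P[v_1|v_m] C[v_1|v_m] P[v_1|v_m], and moreover P[v_1|v_m] C[v_1|v_m] P[v_1|v_m] = (1/(v_m^* v_m)) v_1 v_m^* + Σ_{j=1}^{m−1} (1/(v_j^* v_j)) v_{j+1} v_j^*. -/
import Mathlib


open Matrix BigOperators

/-- `P[v_1|v_m] = Σ_{j=1}^m (1/(v_j^* v_j)) v_j v_j^*`. -/
noncomputable def projSys {n m : ℕ} (v : Fin m → Fin n → ℂ) : Matrix (Fin n) (Fin n) ℂ :=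
  ∑ j, ((star (v j) ⬝ᵥ v j)⁻¹) • Matrix.vecMulVec (v j) (star (v j))

/-- `C[v_1|v_m] = (1/(v_m^* v_m)) v_1 v_m^* + Σ_{j=1}^{m−1} (1/(v_j^* v_j)) v_{j+1} v_j^*
  + 1_n − P[v_1|v_m]`, written with cyclic successor on `Fin m`. -/
noncomputable def cycSys {n m : ℕ} [NeZero m] (v : Fin m → Fin n → ℂ) :
    Matrix (Fin n) (Fin n) ℂ :=
  (∑ j, ((star (v j) ⬝ᵥ v j)⁻¹) • Matrix.vecMulVec (v (j + 1)) (star (v j))) + 1 - projSys v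

lemma vmv_mul_vmv {n : ℕ} (a b c d : Fin n → ℂ) :
    Matrix.vecMulVec a b * Matrix.vecMulVec c d = (b ⬝ᵥ c) • Matrix.vecMulVec a d := by
  ext i j
  simp only [Matrix.mul_apply, Matrix.vecMulVec_apply, Matrix.smul_apply, dotProduct,
    Finset.sum_mul, smul_eq_mul]
  exact Finset.sum_congr rfl fun k _ => by ring

open ComplexOrder in
lemma dot_star_self_ne {n : ℕ} {w : Fin n → ℂ} (h : w ≠ 0) : star w ⬝ᵥ w ≠ 0 :=
  fun hz => h (dotProduct_star_self_eq_zero.mp hz)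

lemma proj_mul_shift {n m : ℕ} (v : Fin m → Fin n → ℂ)
    (hnz : ∀ j, v j ≠ 0)
    (horth : ∀ j k, j ≠ k → star (v j) ⬝ᵥ v k = 0)
    (f : Fin m → Fin m) :
    projSys v *
      (∑ k, ((star (v k) ⬝ᵥ v k)⁻¹) • Matrix.vecMulVec (v (f k)) (star (v k))) =
      ∑ k, ((star (v k) ⬝ᵥ v k)⁻¹) • Matrix.vecMulVec (v (f k)) (star (v k)) := by
  have hd : ∀ j, star (v j) ⬝ᵥ v j ≠ 0 := fun j => dot_star_self_ne (hnz j)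
  rw [projSys, Finset.sum_mul]
  simp_rw [Finset.mul_sum, Matrix.smul_mul, Matrix.mul_smul, vmv_mul_vmv]
  rw [Finset.sum_comm]
  congr 1; ext k
  rw [Finset.sum_eq_single (f k)]
  · simp only [Matrix.smul_apply, smul_eq_mul]
    field_simp [hd (f k), hd k]
  · intro j _ hj
    rw [horth j (f k) hj]
    simp
  · simp

lemma shift_mul_proj {n m : ℕ} (v : Fin m → Fin n → ℂ)
    (hnz : ∀ j, v j ≠ 0)
    (horth : ∀ j k, j ≠ k → star (v j) ⬝ᵥ v k = 0)
    (f : Fin m → Fin m) :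
    (∑ k, ((star (v k) ⬝ᵥ v k)⁻¹) • Matrix.vecMulVec (v (f k)) (star (v k))) * projSys v =
      ∑ k, ((star (v k) ⬝ᵥ v k)⁻¹) • Matrix.vecMulVec (v (f k)) (star (v k)) := by
  have hd : ∀ j, star (v j) ⬝ᵥ v j ≠ 0 := fun j => dot_star_self_ne (hnz j)
  rw [projSys, Finset.sum_mul]
  simp_rw [Finset.mul_sum, Matrix.smul_mul, Matrix.mul_smul, vmv_mul_vmv]
  congr 1; ext k
  rw [Finset.sum_eq_single k]
  · simp only [Matrix.smul_apply, smul_eq_mul]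
    field_simp [hd (f k), hd k]
  · intro j _ hj
    rw [horth k j (Ne.symm hj)]
    simp
  · simp

/-- for an orthogonal `m`-system in `ℂ^n` (`m ≤ n` positive),
`C P = P C = P C P`, and `P C P = (1/(v_m^* v_m)) v_1 v_m^* + Σ_{j=1}^{m−1}
(1/(v_j^* v_j)) v_{j+1} v_j^*` (the cyclic sum). -/
theorem stmt_2 (n m : ℕ) [NeZero m] (hmn : m ≤ n)
    (v : Fin m → Fin n → ℂ)
    (hnz : ∀ j, v j ≠ 0)
    (horth : ∀ j k, j ≠ k → star (v j) ⬝ᵥ v k = 0) :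
    cycSys v * projSys v = projSys v * cycSys v ∧
    projSys v * cycSys v = projSys v * cycSys v * projSys v ∧
    projSys v * cycSys v * projSys v =
      ∑ j, ((star (v j) ⬝ᵥ v j)⁻¹) • Matrix.vecMulVec (v (j + 1)) (star (v j)) := by
  set S := ∑ j, ((star (v j) ⬝ᵥ v j)⁻¹) • Matrix.vecMulVec (v (j + 1)) (star (v j)) with hS
  have hPP : projSys v * projSys v = projSys v := by
    have := proj_mul_shift v hnz horth id
    simpa [projSys] using this
  have hPS : projSys v * S = S := proj_mul_shift v hnz horth (· + 1)
  have hSP : S * projSys v = S := shift_mul_proj v hnz horth (· + 1)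
  have hCP : cycSys v * projSys v = S := by
    rw [cycSys, sub_mul, add_mul, hSP, one_mul, hPP]
    abel
  have hPC : projSys v * cycSys v = S := by
    rw [cycSys, mul_sub, mul_add, hPS, mul_one, hPP]
    abel
  refine ⟨by rw [hCP, hPC], ?_, ?_⟩
  · rw [hPC, hSP]
  · rw [hPC, hSP]
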